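/- Let T > 0, let γ : [0,T] → ℝⁿ be continuously differentiable, assume the kernel function K(x,y) = ⟪k y, k x⟫ is continuously differentiable on ℝⁿ × ℝⁿ, and let Γ_γ ∈ H be the occupation kernel of γ. Then there exists a constant C ≥ 0 such that for every partition 0 = t₀ < t₁ < ⋯ < t_F = T, setting h := max_{1 ≤ i ≤ F} (t_i − t_{i−1}) and Γ̂ := Σ_{i=1}^{F} (t_i − t_{i−1}) · k(γ t_i), one has ‖Γ_γ − Γ̂‖² ≤ C · h. -/

import Mathlib

open scoped RealInnerProductSpace
open Set MeasureTheory

/-- Riemann-sum (right-hand rule) approximation of the occupation kernel: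
there is `C ≥ 0` such that for every partition `0 = t₀ < t₁ < ⋯ < t_F = T` with
mesh at most `h`, the approximation `Γ̂ = Σᵢ (tᵢ − tᵢ₋₁) • k (γ tᵢ)` satisfies
`‖Γ − Γ̂‖² ≤ C * h`. -/
theorem occupation_kernel_quadrature_convergence
    {n : ℕ} (hn : 1 ≤ n) {H : Type*} [NormedAddCommGroup H] [InnerProductSpace ℝ H]
    [CompleteSpace H]
    (ι : H →ₗ[ℝ] (EuclideanSpace ℝ (Fin n) → ℝ)) (hι : Function.Injective ι)
    (k : EuclideanSpace ℝ (Fin n) → H)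
    (hrep : ∀ (g : H) (x : EuclideanSpace ℝ (Fin n)), ι g x = ⟪g, k x⟫)
    (hK : ContDiff ℝ 1 (fun p : EuclideanSpace ℝ (Fin n) × EuclideanSpace ℝ (Fin n) =>
      (⟪k p.2, k p.1⟫ : ℝ)))
    (T : ℝ) (hT : 0 < T)
    (γ : ℝ → EuclideanSpace ℝ (Fin n)) (hγ : ContDiffOn ℝ 1 γ (Set.Icc 0 T))
    (Γ : H) (hΓ : ∀ g : H, ⟪g, Γ⟫ = ∫ t in (0:ℝ)..T, ι g (γ t)) :
    ∃ C : ℝ, 0 ≤ C ∧ ∀ (F : ℕ), 0 < F → ∀ t : ℕ → ℝ,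
      t 0 = 0 → t F = T → (∀ i < F, t i < t (i + 1)) →
      ∀ h : ℝ, (∀ i < F, t (i + 1) - t i ≤ h) →
      ‖Γ - ∑ i ∈ Finset.range F, (t (i + 1) - t i) • k (γ (t (i + 1)))‖ ^ 2 ≤ C * h := by
  set KK : EuclideanSpace ℝ (Fin n) × EuclideanSpace ℝ (Fin n) → ℝ :=
    fun p => ⟪k p.2, k p.1⟫ with hKK
  -- expansion of the norm square through KK
  have hexp : ∀ x y : EuclideanSpace ℝ (Fin n), ‖k x - k y‖ ^ 2
      = (KK (x, x) - KK (y, x)) + (KK (y, y) - KK (x, y)) := by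
    intro x y
    have h1 : ⟪k x, k x⟫ = ‖k x‖ ^ 2 := real_inner_self_eq_norm_sq _
    have h2 : ⟪k y, k y⟫ = ‖k y‖ ^ 2 := real_inner_self_eq_norm_sq _
    have h3 : ⟪k y, k x⟫ = ⟪k x, k y⟫ := real_inner_comm _ _
    have h4 := norm_sub_sq_real (k x) (k y)
    simp only [hKK]
    linarith
  -- continuity of k
  have hkcont : Continuous k := by
    rw [continuous_iff_continuousAt]
    intro y
    rw [ContinuousAt, tendsto_iff_dist_tendsto_zero]
    have h1 : Continuous fun x : EuclideanSpace ℝ (Fin n) =>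
        Real.sqrt ((KK (x, x) - KK (y, x)) + (KK (y, y) - KK (x, y))) := by
      apply Real.continuous_sqrt.comp
      have hc : Continuous KK := hK.continuous
      fun_prop
    have h2 := h1.tendsto y
    have h3 : ((KK (y, y) - KK (y, y)) + (KK (y, y) - KK (y, y))) = 0 := by ring
    rw [h3, Real.sqrt_zero] at h2
    refine h2.congr fun x => ?_
    rw [dist_eq_norm, ← hexp, Real.sqrt_sq (norm_nonneg _)]
  -- Lipschitz bound for γ on [0, T]
  have hu : UniqueDiffOn ℝ (Icc (0:ℝ) T) := uniqueDiffOn_Icc hT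
  obtain ⟨Mγ, hMγ⟩ := isCompact_Icc.exists_bound_of_continuousOn
    (hγ.continuousOn_fderivWithin hu le_rfl)
  have hγlip : LipschitzOnWith Mγ.toNNReal γ (Icc 0 T) := by
    refine (convex_Icc _ _).lipschitzOnWith_of_nnnorm_fderivWithin_le
      (hγ.differentiableOn one_ne_zero) (fun x hx => ?_)
    rw [← norm_toNNReal]
    exact Real.toNNReal_mono (hMγ x hx)
  -- Lipschitz bound for KK on a big ball
  obtain ⟨R, hR⟩ := isCompact_Icc.exists_bound_of_continuousOn hγ.continuousOn
  set S := Metric.closedBall (0 : EuclideanSpace ℝ (Fin n) × EuclideanSpace ℝ (Fin n)) R with hSdef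
  have hS : ∀ a ∈ Icc (0:ℝ) T, ∀ b ∈ Icc (0:ℝ) T, (γ a, γ b) ∈ S := by
    intro a ha b hb
    rw [hSdef, Metric.mem_closedBall, dist_zero_right, Prod.norm_def]
    exact max_le (hR a ha) (hR b hb)
  obtain ⟨MK, hMK⟩ := (isCompact_closedBall (0 : EuclideanSpace ℝ (Fin n) × EuclideanSpace ℝ (Fin n)) R).exists_bound_of_continuousOn
    ((hK.continuous_fderiv one_ne_zero).continuousOn)
  have hKlip : LipschitzOnWith MK.toNNReal KK S := by
    refine (convex_closedBall _ _).lipschitzOnWith_of_nnnorm_fderiv_le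
      (fun x _ => (hK.differentiable one_ne_zero).differentiableAt) (fun x hx => ?_)
    rw [← norm_toNNReal]
    exact Real.toNNReal_mono (hMK x hx)
  set B : ℝ := 2 * (MK.toNNReal : ℝ) * (Mγ.toNNReal : ℝ) with hBdef
  have hB : (0:ℝ) ≤ B := by positivity
  -- key quantitative continuity bound
  have hkey : ∀ a ∈ Icc (0:ℝ) T, ∀ b ∈ Icc (0:ℝ) T,
      ‖k (γ a) - k (γ b)‖ ^ 2 ≤ B * |a - b| := by
    intro a ha b hb
    have hγd : dist (γ a) (γ b) ≤ (Mγ.toNNReal : ℝ) * |a - b| := by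
      have := hγlip.dist_le_mul a ha b hb
      rwa [Real.dist_eq] at this
    have d1 : KK (γ a, γ a) - KK (γ b, γ a) ≤ (MK.toNNReal : ℝ) * ((Mγ.toNNReal : ℝ) * |a - b|) := by
      have h1 := hKlip.dist_le_mul (γ a, γ a) (hS a ha a ha) (γ b, γ a) (hS b hb a ha)
      have h2 : dist ((γ a, γ a) : EuclideanSpace ℝ (Fin n) × EuclideanSpace ℝ (Fin n)) (γ b, γ a) = dist (γ a) (γ b) := by
        rw [Prod.dist_eq]; simp [dist_self, dist_nonneg]
      calc KK (γ a, γ a) - KK (γ b, γ a) ≤ |KK (γ a, γ a) - KK (γ b, γ a)| := le_abs_self _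
        _ = dist (KK (γ a, γ a)) (KK (γ b, γ a)) := (Real.dist_eq _ _).symm
        _ ≤ (MK.toNNReal : ℝ) * dist ((γ a, γ a) : EuclideanSpace ℝ (Fin n) × EuclideanSpace ℝ (Fin n)) (γ b, γ a) := h1
        _ = (MK.toNNReal : ℝ) * dist (γ a) (γ b) := by rw [h2]
        _ ≤ _ := mul_le_mul_of_nonneg_left hγd (NNReal.coe_nonneg _)
    have d2 : KK (γ b, γ b) - KK (γ a, γ b) ≤ (MK.toNNReal : ℝ) * ((Mγ.toNNReal : ℝ) * |a - b|) := by
      have h1 := hKlip.dist_le_mul (γ b, γ b) (hS b hb b hb) (γ a, γ b) (hS a ha b hb)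
      have h2 : dist ((γ b, γ b) : EuclideanSpace ℝ (Fin n) × EuclideanSpace ℝ (Fin n)) (γ a, γ b) = dist (γ a) (γ b) := by
        rw [Prod.dist_eq]; simp [dist_self, dist_comm, dist_nonneg]
      calc KK (γ b, γ b) - KK (γ a, γ b) ≤ |KK (γ b, γ b) - KK (γ a, γ b)| := le_abs_self _
        _ = dist (KK (γ b, γ b)) (KK (γ a, γ b)) := (Real.dist_eq _ _).symm
        _ ≤ (MK.toNNReal : ℝ) * dist ((γ b, γ b) : EuclideanSpace ℝ (Fin n) × EuclideanSpace ℝ (Fin n)) (γ a, γ b) := h1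
        _ = (MK.toNNReal : ℝ) * dist (γ a) (γ b) := by rw [h2]
        _ ≤ _ := mul_le_mul_of_nonneg_left hγd (NNReal.coe_nonneg _)
    rw [hexp]
    have : B * |a - b| = (MK.toNNReal : ℝ) * ((Mγ.toNNReal : ℝ) * |a - b|)
        + (MK.toNNReal : ℝ) * ((Mγ.toNNReal : ℝ) * |a - b|) := by rw [hBdef]; ring
    linarith
  -- Γ is the Bochner integral of k ∘ γ
  have hkγ : ContinuousOn (fun s => k (γ s)) (Icc (0:ℝ) T) :=
    hkcont.comp_continuousOn hγ.continuousOn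
  have hintT : IntervalIntegrable (fun s => k (γ s)) volume 0 T := by
    apply ContinuousOn.intervalIntegrable
    rwa [Set.uIcc_of_le hT.le]
  have hΓint : Γ = ∫ s in (0:ℝ)..T, k (γ s) := by
    have key : ∀ g : H, ⟪g, Γ - ∫ s in (0:ℝ)..T, k (γ s)⟫ = 0 := by
      intro g
      rw [inner_sub_right, hΓ g, sub_eq_zero]
      have heq : (fun s => ι g (γ s)) = fun s => (innerSL ℝ g) (k (γ s)) := by
        funext s; rw [hrep]; simp
      rw [heq, ContinuousLinearMap.intervalIntegral_comp_comm _ hintT]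
      simp
    have h0 := key (Γ - ∫ s in (0:ℝ)..T, k (γ s))
    rw [inner_self_eq_zero, sub_eq_zero] at h0
    exact h0
  refine ⟨B * T ^ 2, by positivity, ?_⟩
  intro F hF t ht0 htT hstep h hmesh
  -- monotonicity of the partition
  have hmono : ∀ i j : ℕ, i ≤ j → j ≤ F → t i ≤ t j := by
    intro i j hij hjF
    induction j with
    | zero => obtain rfl : i = 0 := Nat.le_zero.mp hij; exact le_rfl
    | succ m ih =>
      rcases Nat.eq_or_lt_of_le hij with rfl | hlt'
      · exact le_rfl
      · exact (ih (Nat.lt_succ_iff.mp hlt') (Nat.le_of_succ_le hjF)).trans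
          (hstep m (Nat.lt_of_succ_le hjF)).le
  have hmem : ∀ i, i ≤ F → t i ∈ Icc (0:ℝ) T := fun i hi =>
    ⟨ht0 ▸ hmono 0 i (Nat.zero_le _) hi, htT ▸ hmono i F hi le_rfl⟩
  have h0h : 0 < h := lt_of_lt_of_le (sub_pos.mpr (hstep 0 hF)) (hmesh 0 hF)
  have hint : ∀ i < F, IntervalIntegrable (fun s => k (γ s)) volume (t i) (t (i + 1)) := by
    intro i hi
    exact (hkγ.mono (Set.uIcc_subset_Icc (hmem i hi.le) (hmem (i + 1) hi))).intervalIntegrable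
  have hsplit : (∫ s in (0:ℝ)..T, k (γ s))
      = ∑ i ∈ Finset.range F, ∫ s in t i..t (i + 1), k (γ s) := by
    have := intervalIntegral.sum_integral_adjacent_intervals (μ := volume) (a := t) hint
    rw [ht0, htT] at this
    exact this.symm
  have hdiff : Γ - ∑ i ∈ Finset.range F, (t (i + 1) - t i) • k (γ (t (i + 1)))
      = ∑ i ∈ Finset.range F, ∫ s in t i..t (i + 1), (k (γ s) - k (γ (t (i + 1)))) := by
    rw [hΓint, hsplit, ← Finset.sum_sub_distrib]
    refine Finset.sum_congr rfl fun i hi => ?_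
    rw [intervalIntegral.integral_sub (hint i (Finset.mem_range.mp hi))
      intervalIntegrable_const, intervalIntegral.integral_const]
  have hnorm : ‖Γ - ∑ i ∈ Finset.range F, (t (i + 1) - t i) • k (γ (t (i + 1)))‖
      ≤ Real.sqrt (B * h) * T := by
    rw [hdiff]
    calc ‖∑ i ∈ Finset.range F, ∫ s in t i..t (i + 1), (k (γ s) - k (γ (t (i + 1))))‖
        ≤ ∑ i ∈ Finset.range F, ‖∫ s in t i..t (i + 1), (k (γ s) - k (γ (t (i + 1))))‖ :=
          norm_sum_le _ _
      _ ≤ ∑ i ∈ Finset.range F, Real.sqrt (B * h) * |t (i + 1) - t i| := by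
          refine Finset.sum_le_sum fun i hi => ?_
          have hiF := Finset.mem_range.mp hi
          refine intervalIntegral.norm_integral_le_of_norm_le_const fun x hx => ?_
          have hx' : x ∈ Ioc (t i) (t (i + 1)) := by
            rwa [Set.uIoc_of_le (hstep i hiF).le] at hx
          have hxIcc : x ∈ Icc (0:ℝ) T :=
            ⟨(hmem i hiF.le).1.trans hx'.1.le, hx'.2.trans (hmem (i + 1) hiF).2⟩
          have h2 : ‖k (γ x) - k (γ (t (i + 1)))‖ ^ 2 ≤ B * h := by
            refine (hkey x hxIcc (t (i + 1)) (hmem (i + 1) hiF)).trans ?_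
            refine mul_le_mul_of_nonneg_left ?_ hB
            rw [abs_of_nonpos (sub_nonpos.mpr hx'.2)]
            have := hmesh i hiF
            linarith [hx'.1]
          exact (Real.le_sqrt (norm_nonneg _) (by positivity)).mpr h2
      _ = Real.sqrt (B * h) * T := by
          rw [← Finset.mul_sum]
          congr 1
          rw [Finset.sum_congr rfl fun i hi =>
            abs_of_nonneg (sub_nonneg.mpr (hstep i (Finset.mem_range.mp hi)).le),
            Finset.sum_range_sub t, ht0, htT, sub_zero]
  calc ‖Γ - ∑ i ∈ Finset.range F, (t (i + 1) - t i) • k (γ (t (i + 1)))‖ ^ 2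
      ≤ (Real.sqrt (B * h) * T) ^ 2 := pow_le_pow_left₀ (norm_nonneg _) hnorm 2
    _ = B * T ^ 2 * h := by
        rw [mul_pow, Real.sq_sqrt (by positivity)]; ring
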